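/- arXiv:1603.00939 — 5 statements merged into one kernel-verified Lean document; each statement's English description precedes it below -/
import Mathlib

section
/- (Upper bound for outflow via incoming capacity) Suppose there exist feasible customer flows f_m and a feasible rebalancing flow f_R on a capacitated directed graph; then for every subset S ⊆ V, the total customer outflow across the cut is bounded by both the outgoing and the incoming capacity of the cut: F_out(S) ≤ C_out(S) and F_out(S) ≤ C_in(S), where F_out(S) = Σ_m Σ_{u∈S, v∉S} f_m(u,v). -/
/-- Upper bound for outflow: if feasible customer flows and a feasible rebalancing
flow exist, then for every cut the total customer outflow is bounded by both the
outgoing and the incoming capacity of the cut. -/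
theorem stmt_6 {V M : Type*} [Fintype V] [DecidableEq V] [Fintype M]
    (c : V → V → ℝ) (hc : ∀ u v, 0 ≤ c u v)
    (f : M → V → V → ℝ) (hf : ∀ m u v, 0 ≤ f m u v)
    (s t : M → V) (lam : M → ℝ)
    (hst : ∀ m, s m ≠ t m) (hlam : ∀ m, 0 < lam m)
    (hcons : ∀ m v, (∑ u : V, f m u v) + (if v = s m then lam m else 0) =
      (∑ w : V, f m v w) + (if v = t m then lam m else 0))
    (fR : V → V → ℝ) (hfR : ∀ u v, 0 ≤ fR u v)
    (hreb : ∀ v : V, (∑ u : V, fR u v) + (∑ m : M, if v = t m then lam m else 0) =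
      (∑ w : V, fR v w) + (∑ m : M, if v = s m then lam m else 0))
    (hcap : ∀ u v, fR u v + (∑ m : M, f m u v) ≤ c u v)
    (S : Finset V) :
    (∑ m : M, ∑ u ∈ S, ∑ v ∈ Sᶜ, f m u v) ≤ (∑ u ∈ S, ∑ v ∈ Sᶜ, c u v) ∧
    (∑ m : M, ∑ u ∈ S, ∑ v ∈ Sᶜ, f m u v) ≤ (∑ u ∈ Sᶜ, ∑ v ∈ S, c u v) := by
  set F : V → V → ℝ := fun u v => fR u v + ∑ m : M, f m u v with hF
  have hFc : ∀ u v, F u v ≤ c u v := hcap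
  have hFnn : ∀ u v, 0 ≤ F u v :=
    fun u v => add_nonneg (hfR u v) (Finset.sum_nonneg fun m _ => hf m u v)
  -- total flow sum equals F sums
  have hswap : ∀ A B : Finset V,
      (∑ m : M, ∑ u ∈ A, ∑ v ∈ B, f m u v) = ∑ u ∈ A, ∑ v ∈ B, ∑ m : M, f m u v := by
    intro A B
    rw [Finset.sum_comm]
    exact Finset.sum_congr rfl fun u _ => Finset.sum_comm
  have hle : ∀ A B : Finset V,
      (∑ m : M, ∑ u ∈ A, ∑ v ∈ B, f m u v) ≤ ∑ u ∈ A, ∑ v ∈ B, F u v := by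
    intro A B
    rw [hswap]
    refine Finset.sum_le_sum fun u _ => Finset.sum_le_sum fun v _ => ?_
    simp only [hF]
    linarith [hfR u v]
  have hcut1 : (∑ u ∈ S, ∑ v ∈ Sᶜ, F u v) ≤ ∑ u ∈ S, ∑ v ∈ Sᶜ, c u v :=
    Finset.sum_le_sum fun u _ => Finset.sum_le_sum fun v _ => hFc u v
  have hcut2 : (∑ u ∈ Sᶜ, ∑ v ∈ S, F u v) ≤ ∑ u ∈ Sᶜ, ∑ v ∈ S, c u v :=
    Finset.sum_le_sum fun u _ => Finset.sum_le_sum fun v _ => hFc u v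
  -- circulation
  have hcirc : ∀ v : V, (∑ u : V, F u v) = ∑ w : V, F v w := by
    intro v
    have h1 := hreb v
    have h2 : (∑ m : M, ((∑ u : V, f m u v) + (if v = s m then lam m else 0))) =
        ∑ m : M, ((∑ w : V, f m v w) + (if v = t m then lam m else 0)) :=
      Finset.sum_congr rfl fun m _ => hcons m v
    simp only [Finset.sum_add_distrib] at h2
    have e1 : (∑ m : M, ∑ u : V, f m u v) = ∑ u : V, ∑ m : M, f m u v :=
      Finset.sum_comm
    have e2 : (∑ m : M, ∑ w : V, f m v w) = ∑ w : V, ∑ m : M, f m v w :=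
      Finset.sum_comm
    rw [e1, e2] at h2
    simp only [hF, Finset.sum_add_distrib]
    linarith
  -- cut balance
  have hkey : (∑ u ∈ S, ∑ v ∈ Sᶜ, F u v) = ∑ u ∈ Sᶜ, ∑ v ∈ S, F u v := by
    have h : (∑ v ∈ S, ∑ u : V, F u v) = ∑ v ∈ S, ∑ w : V, F v w :=
      Finset.sum_congr rfl fun v _ => hcirc v
    have hsplit : ∀ g : V → ℝ, (∑ u : V, g u) = (∑ u ∈ S, g u) + ∑ u ∈ Sᶜ, g u := by
      intro g
      rw [Finset.sum_add_sum_compl]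
    simp only [hsplit] at h
    rw [Finset.sum_add_distrib, Finset.sum_add_distrib] at h
    have hdiag : (∑ v ∈ S, ∑ u ∈ S, F u v) = ∑ v ∈ S, ∑ w ∈ S, F v w :=
      Finset.sum_comm
    have h2 : (∑ v ∈ S, ∑ u ∈ Sᶜ, F u v) = ∑ v ∈ S, ∑ w ∈ Sᶜ, F v w := by linarith
    rw [← h2, Finset.sum_comm]
  exact ⟨le_trans (hle S Sᶜ) hcut1, le_trans (hle S Sᶜ) (hkey ▸ hcut2)⟩
end

section
/- (Necessary cut condition for feasible flows) If there exist feasible customer flows f_m together with a feasible rebalancing flow f_R on a capacitated directed graph, then for every subset S ⊆ V both cut conditions hold: Σ_{m : s_m ∈ S, t_m ∉ S} λ_m ≤ C_out(S) and Σ_{m : s_m ∈ S, t_m ∉ S} λ_m ≤ C_in(S). -/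
/-- Necessary cut condition for feasible flows: if feasible customer flows and a
feasible rebalancing flow exist, then for every cut the total rate of requests
crossing the cut is bounded by both the outgoing and incoming capacity. -/
theorem stmt_7 {V M : Type*} [Fintype V] [DecidableEq V] [Fintype M]
    (c : V → V → ℝ) (hc : ∀ u v, 0 ≤ c u v)
    (f : M → V → V → ℝ) (hf : ∀ m u v, 0 ≤ f m u v)
    (s t : M → V) (lam : M → ℝ)
    (hst : ∀ m, s m ≠ t m) (hlam : ∀ m, 0 < lam m)
    (hcons : ∀ m v, (∑ u : V, f m u v) + (if v = s m then lam m else 0) =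
      (∑ w : V, f m v w) + (if v = t m then lam m else 0))
    (fR : V → V → ℝ) (hfR : ∀ u v, 0 ≤ fR u v)
    (hreb : ∀ v : V, (∑ u : V, fR u v) + (∑ m : M, if v = t m then lam m else 0) =
      (∑ w : V, fR v w) + (∑ m : M, if v = s m then lam m else 0))
    (hcap : ∀ u v, fR u v + (∑ m : M, f m u v) ≤ c u v)
    (S : Finset V) :
    (∑ m : M, if s m ∈ S ∧ t m ∉ S then lam m else 0) ≤ (∑ u ∈ S, ∑ v ∈ Sᶜ, c u v) ∧
    (∑ m : M, if s m ∈ S ∧ t m ∉ S then lam m else 0) ≤ (∑ u ∈ Sᶜ, ∑ v ∈ S, c u v) := by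
  classical
  -- cut balance identity for any function
  have key : ∀ g : V → V → ℝ,
      (∑ v ∈ S, ((∑ u : V, g u v) - (∑ w : V, g v w))) =
      (∑ u ∈ Sᶜ, ∑ v ∈ S, g u v) - (∑ v ∈ S, ∑ w ∈ Sᶜ, g v w) := by
    intro g
    have h1 : (∑ v ∈ S, ∑ u : V, g u v)
        = (∑ v ∈ S, ∑ u ∈ S, g u v) + ∑ v ∈ S, ∑ u ∈ Sᶜ, g u v := by
      rw [← Finset.sum_add_distrib]
      exact Finset.sum_congr rfl fun v _ => (Finset.sum_add_sum_compl S _).symm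
    have h2 : (∑ v ∈ S, ∑ w : V, g v w)
        = (∑ v ∈ S, ∑ w ∈ S, g v w) + ∑ v ∈ S, ∑ w ∈ Sᶜ, g v w := by
      rw [← Finset.sum_add_distrib]
      exact Finset.sum_congr rfl fun v _ => (Finset.sum_add_sum_compl S _).symm
    have h3 : (∑ v ∈ S, ∑ u ∈ S, g u v) = ∑ v ∈ S, ∑ w ∈ S, g v w := Finset.sum_comm
    have h4 : (∑ v ∈ S, ∑ u ∈ Sᶜ, g u v) = ∑ u ∈ Sᶜ, ∑ v ∈ S, g u v := Finset.sum_comm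
    rw [Finset.sum_sub_distrib, h1, h2, h3, h4]
    ring
  -- per-commodity cut balance
  have hm : ∀ m : M, (∑ u ∈ Sᶜ, ∑ v ∈ S, f m u v) - (∑ v ∈ S, ∑ w ∈ Sᶜ, f m v w)
      = (if t m ∈ S then lam m else 0) - (if s m ∈ S then lam m else 0) := by
    intro m
    rw [← key (f m)]
    have e : ∀ v ∈ S, (∑ u : V, f m u v) - (∑ w : V, f m v w)
        = (if v = t m then lam m else 0) - (if v = s m then lam m else 0) := by
      intro v _; linarith [hcons m v]
    rw [Finset.sum_congr rfl e, Finset.sum_sub_distrib]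
    simp [Finset.sum_ite_eq']
  -- rebalancing cut balance
  have hR : (∑ u ∈ Sᶜ, ∑ v ∈ S, fR u v) - (∑ v ∈ S, ∑ w ∈ Sᶜ, fR v w)
      = (∑ m : M, if s m ∈ S then lam m else 0)
        - (∑ m : M, if t m ∈ S then lam m else 0) := by
    rw [← key fR]
    have e : ∀ v ∈ S, (∑ u : V, fR u v) - (∑ w : V, fR v w)
        = (∑ m : M, if v = s m then lam m else 0)
          - (∑ m : M, if v = t m then lam m else 0) := by
      intro v _; linarith [hreb v]
    rw [Finset.sum_congr rfl e, Finset.sum_sub_distrib]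
    have e1 : (∑ v ∈ S, ∑ m : M, if v = s m then lam m else 0)
        = ∑ m : M, if s m ∈ S then lam m else 0 := by
      rw [Finset.sum_comm]; simp [Finset.sum_ite_eq']
    have e2 : (∑ v ∈ S, ∑ m : M, if v = t m then lam m else 0)
        = ∑ m : M, if t m ∈ S then lam m else 0 := by
      rw [Finset.sum_comm]; simp [Finset.sum_ite_eq']
    rw [e1, e2]
  -- nonnegativity of cut flows
  have hInnn : ∀ m : M, 0 ≤ ∑ u ∈ Sᶜ, ∑ v ∈ S, f m u v := fun m =>
    Finset.sum_nonneg fun u _ => Finset.sum_nonneg fun v _ => hf m u v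
  have hOutnn : ∀ m : M, 0 ≤ ∑ v ∈ S, ∑ w ∈ Sᶜ, f m v w := fun m =>
    Finset.sum_nonneg fun v _ => Finset.sum_nonneg fun w _ => hf m v w
  have hOutRnn : 0 ≤ ∑ v ∈ S, ∑ w ∈ Sᶜ, fR v w :=
    Finset.sum_nonneg fun v _ => Finset.sum_nonneg fun w _ => hfR v w
  have hInRnn : 0 ≤ ∑ u ∈ Sᶜ, ∑ v ∈ S, fR u v :=
    Finset.sum_nonneg fun u _ => Finset.sum_nonneg fun v _ => hfR u v
  -- capacity bounds on the cut
  have hcap1 : (∑ u ∈ S, ∑ v ∈ Sᶜ, (fR u v + ∑ m : M, f m u v))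
      ≤ ∑ u ∈ S, ∑ v ∈ Sᶜ, c u v :=
    Finset.sum_le_sum fun u _ => Finset.sum_le_sum fun v _ => hcap u v
  have hcap2 : (∑ u ∈ Sᶜ, ∑ v ∈ S, (fR u v + ∑ m : M, f m u v))
      ≤ ∑ u ∈ Sᶜ, ∑ v ∈ S, c u v :=
    Finset.sum_le_sum fun u _ => Finset.sum_le_sum fun v _ => hcap u v
  -- splitting the cut sums
  have hsplit1 : (∑ u ∈ S, ∑ v ∈ Sᶜ, (fR u v + ∑ m : M, f m u v))
      = (∑ v ∈ S, ∑ w ∈ Sᶜ, fR v w) + ∑ m : M, ∑ v ∈ S, ∑ w ∈ Sᶜ, f m v w := by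
    simp only [Finset.sum_add_distrib]
    congr 1
    rw [show (∑ u ∈ S, ∑ v ∈ Sᶜ, ∑ m : M, f m u v)
        = ∑ u ∈ S, ∑ m : M, ∑ v ∈ Sᶜ, f m u v from
      Finset.sum_congr rfl fun u _ => Finset.sum_comm, Finset.sum_comm]
  have hsplit2 : (∑ u ∈ Sᶜ, ∑ v ∈ S, (fR u v + ∑ m : M, f m u v))
      = (∑ u ∈ Sᶜ, ∑ v ∈ S, fR u v) + ∑ m : M, ∑ u ∈ Sᶜ, ∑ v ∈ S, f m u v := by
    simp only [Finset.sum_add_distrib]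
    congr 1
    rw [show (∑ u ∈ Sᶜ, ∑ v ∈ S, ∑ m : M, f m u v)
        = ∑ u ∈ Sᶜ, ∑ m : M, ∑ v ∈ S, f m u v from
      Finset.sum_congr rfl fun u _ => Finset.sum_comm, Finset.sum_comm]
  constructor
  · -- outgoing capacity bound
    have h1 : (∑ m : M, if s m ∈ S ∧ t m ∉ S then lam m else 0)
        ≤ ∑ m : M, ∑ v ∈ S, ∑ w ∈ Sᶜ, f m v w := by
      apply Finset.sum_le_sum
      intro m _
      split_ifs with h
      · have := hm m
        simp only [h.1, h.2, if_true, if_false] at this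
        linarith [hInnn m]
      · exact hOutnn m
    calc (∑ m : M, if s m ∈ S ∧ t m ∉ S then lam m else 0)
        ≤ ∑ m : M, ∑ v ∈ S, ∑ w ∈ Sᶜ, f m v w := h1
      _ ≤ (∑ v ∈ S, ∑ w ∈ Sᶜ, fR v w) + ∑ m : M, ∑ v ∈ S, ∑ w ∈ Sᶜ, f m v w := by
          linarith
      _ = ∑ u ∈ S, ∑ v ∈ Sᶜ, (fR u v + ∑ m : M, f m u v) := hsplit1.symm
      _ ≤ ∑ u ∈ S, ∑ v ∈ Sᶜ, c u v := hcap1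
  · -- incoming capacity bound
    have h5 : (∑ m : M, if s m ∈ S ∧ t m ∉ S then lam m else 0)
        ≤ ((∑ m : M, if s m ∈ S then lam m else 0)
            - (∑ m : M, if t m ∈ S then lam m else 0))
          + ∑ m : M, if s m ∉ S ∧ t m ∈ S then lam m else 0 := by
      rw [← Finset.sum_sub_distrib, ← Finset.sum_add_distrib]
      apply Finset.sum_le_sum
      intro m _
      by_cases h1 : s m ∈ S <;> by_cases h2 : t m ∈ S <;> simp [h1, h2]
    have h6 : (∑ m : M, if s m ∉ S ∧ t m ∈ S then lam m else 0)
        ≤ ∑ m : M, ∑ u ∈ Sᶜ, ∑ v ∈ S, f m u v := by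
      apply Finset.sum_le_sum
      intro m _
      split_ifs with h
      · have := hm m
        simp only [h.1, h.2, if_true, if_false] at this
        linarith [hOutnn m]
      · exact hInnn m
    calc (∑ m : M, if s m ∈ S ∧ t m ∉ S then lam m else 0)
        ≤ ((∑ m : M, if s m ∈ S then lam m else 0)
            - (∑ m : M, if t m ∈ S then lam m else 0))
          + ∑ m : M, if s m ∉ S ∧ t m ∈ S then lam m else 0 := h5
      _ ≤ (∑ u ∈ Sᶜ, ∑ v ∈ S, fR u v) + ∑ m : M, ∑ u ∈ Sᶜ, ∑ v ∈ S, f m u v := by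
          linarith [hR, h6]
      _ = ∑ u ∈ Sᶜ, ∑ v ∈ S, (fR u v + ∑ m : M, f m u v) := hsplit2.symm
      _ ≤ ∑ u ∈ Sᶜ, ∑ v ∈ S, c u v := hcap2
end

section
/- (Rebalancing does not increase congestion on symmetric networks) Let G be a capacity-symmetric directed graph with capacities c : V × V → ℝ≥0, and suppose there exists a set of feasible customer flows f_m (satisfying flow conservation and Σ_m f_m(u,v) ≤ c(u,v) for all edges). Then there exists a feasible rebalancing flow f_R : V × V → ℝ≥0 satisfying the rebalancing balance equation at every node and the joint capacity constraint f_R(u,v) + Σ_m f_m(u,v) ≤ c(u,v) for all (u,v). -/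
/-- Rebalancing does not increase congestion on capacity-symmetric networks:
given feasible customer flows, a feasible rebalancing flow always exists. -/
theorem stmt_10 {V M : Type*} [Fintype V] [DecidableEq V] [Fintype M]
    (c : V → V → ℝ) (hc : ∀ u v, 0 ≤ c u v)
    (hsym : ∀ S : Finset V, (∑ u ∈ S, ∑ v ∈ Sᶜ, c u v) = ∑ u ∈ Sᶜ, ∑ v ∈ S, c u v)
    (s t : M → V) (lam : M → ℝ)
    (hst : ∀ m, s m ≠ t m) (hlam : ∀ m, 0 < lam m)
    (f : M → V → V → ℝ) (hf : ∀ m u v, 0 ≤ f m u v)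
    (hcons : ∀ m v, (∑ u : V, f m u v) + (if v = s m then lam m else 0) =
      (∑ w : V, f m v w) + (if v = t m then lam m else 0))
    (hfcap : ∀ u v, (∑ m : M, f m u v) ≤ c u v) :
    ∃ fR : V → V → ℝ,
      (∀ u v, 0 ≤ fR u v) ∧
      (∀ v : V, (∑ u : V, fR u v) + (∑ m : M, if v = t m then lam m else 0) =
        (∑ w : V, fR v w) + (∑ m : M, if v = s m then lam m else 0)) ∧
      (∀ u v, fR u v + (∑ m : M, f m u v) ≤ c u v) := by
  refine ⟨fun u v => c u v - ∑ m : M, f m u v, ?_, ?_, ?_⟩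
  · intro u v; dsimp only; linarith [hfcap u v]
  · intro v
    have hcv : (∑ u : V, c u v) = ∑ w : V, c v w := by
      have h := hsym {v}
      simp only [Finset.sum_singleton] at h
      have h1 : (∑ w ∈ ({v} : Finset V)ᶜ, c v w) + c v v = ∑ w : V, c v w := by
        rw [Finset.compl_singleton, Finset.sum_erase_add _ _ (Finset.mem_univ v)]
      have h2 : (∑ u ∈ ({v} : Finset V)ᶜ, c u v) + c v v = ∑ u : V, c u v := by
        rw [Finset.compl_singleton, Finset.sum_erase_add _ _ (Finset.mem_univ v)]
      linarith
    have hm : (∑ m : M, ∑ u : V, f m u v) + (∑ m : M, if v = s m then lam m else 0) =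
        (∑ m : M, ∑ w : V, f m v w) + (∑ m : M, if v = t m then lam m else 0) := by
      rw [← Finset.sum_add_distrib, ← Finset.sum_add_distrib]
      exact Finset.sum_congr rfl fun m _ => hcons m v
    have e1 : (∑ u : V, (c u v - ∑ m : M, f m u v)) =
        (∑ u : V, c u v) - ∑ m : M, ∑ u : V, f m u v := by
      rw [Finset.sum_sub_distrib, Finset.sum_comm]
    have e2 : (∑ w : V, (c v w - ∑ m : M, f m v w)) =
        (∑ w : V, c v w) - ∑ m : M, ∑ w : V, f m v w := by
      rw [Finset.sum_sub_distrib, Finset.sum_comm]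
    rw [e1, e2]
    linarith
  · intro u v; dsimp only; linarith [hfcap u v]
end

section
/- (Saturated-cut contradiction step) Let c be capacities on V × V, f_m feasible customer flows, and f̂_R a partial rebalancing flow that is not feasible. Suppose there is a subset S ⊆ V such that all defective destinations of f̂_R lie in S, all defective origins lie outside S, and every edge from S to its complement is saturated, i.e. f̂_R(u,v) + Σ_m f_m(u,v) = c(u,v) for all u ∈ S, v ∉ S. Then the incoming capacity strictly exceeds the outgoing capacity of the cut: C_in(S) > C_out(S); in particular the network is not capacity-symmetric. -/
/-- Cross-cut identity: the sum over `S` of (in-flow minus out-flow) of a flow `g`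
equals the flow entering `S` across the cut minus the flow leaving `S`. -/
lemma cross_cut_aux {V : Type*} [Fintype V] [DecidableEq V] (g : V → V → ℝ) (S : Finset V) :
    ∑ v ∈ S, ((∑ u : V, g u v) - (∑ u : V, g v u)) =
      (∑ v ∈ S, ∑ u ∈ Sᶜ, g u v) - (∑ v ∈ S, ∑ u ∈ Sᶜ, g v u) := by
  have key : ∀ h : V → V → ℝ, (∑ v ∈ S, ∑ u : V, h u v)
      = (∑ v ∈ S, ∑ u ∈ S, h u v) + ∑ v ∈ S, ∑ u ∈ Sᶜ, h u v := by
    intro h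
    rw [← Finset.sum_add_distrib]
    exact Finset.sum_congr rfl fun v _ => (Finset.sum_add_sum_compl S _).symm
  rw [Finset.sum_sub_distrib, key (fun u v => g u v), key (fun u v => g v u)]
  have hsw : (∑ v ∈ S, ∑ u ∈ S, g u v) = ∑ v ∈ S, ∑ u ∈ S, g v u := Finset.sum_comm
  ring_nf
  linarith [hsw]

/-- Saturated-cut contradiction step: if a partial rebalancing flow that is not
feasible admits a cut S containing all defective destinations, excluding all
defective origins, and all of whose outgoing edges are saturated, then the incoming
capacity strictly exceeds the outgoing capacity of the cut; in particular the
network is not capacity-symmetric. -/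
theorem stmt_11 {V M : Type*} [Fintype V] [DecidableEq V] [Fintype M]
    (c : V → V → ℝ) (hc : ∀ u v, 0 ≤ c u v)
    (s t : M → V) (lam : M → ℝ) (hlam : ∀ m, 0 < lam m)
    (hdisj : ∀ v : V, ¬((∃ m, s m = v) ∧ (∃ m, t m = v)))
    (f : M → V → V → ℝ) (hf : ∀ m u v, 0 ≤ f m u v)
    (hcons : ∀ m v, (∑ u : V, f m u v) + (if v = s m then lam m else 0) =
      (∑ w : V, f m v w) + (if v = t m then lam m else 0))
    (fR : V → V → ℝ) (hfR : ∀ u v, 0 ≤ fR u v)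
    (hmid : ∀ v : V, (¬∃ m, s m = v) → (¬∃ m, t m = v) →
      (∑ u : V, fR u v) = ∑ w : V, fR v w)
    (horig : ∀ v : V, (∃ m, s m = v) →
      (∑ u : V, fR u v) ≤ (∑ w : V, fR v w) + (∑ m : M, if v = s m then lam m else 0))
    (hdest : ∀ v : V, (∃ m, t m = v) →
      (∑ w : V, fR v w) ≤ (∑ u : V, fR u v) + (∑ m : M, if v = t m then lam m else 0))
    (hcap : ∀ u v, fR u v + (∑ m : M, f m u v) ≤ c u v)
    (hnotfeas : ¬∀ v : V, (∑ u : V, fR u v) + (∑ m : M, if v = t m then lam m else 0) =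
      (∑ w : V, fR v w) + (∑ m : M, if v = s m then lam m else 0))
    (S : Finset V)
    (hdestS : ∀ v : V, (∃ m, t m = v) →
      (∑ w : V, fR v w) < (∑ u : V, fR u v) + (∑ m : M, if v = t m then lam m else 0) →
      v ∈ S)
    (horigS : ∀ v : V, (∃ m, s m = v) →
      (∑ u : V, fR u v) < (∑ w : V, fR v w) + (∑ m : M, if v = s m then lam m else 0) →
      v ∉ S)
    (hsat : ∀ u ∈ S, ∀ v ∈ Sᶜ, fR u v + (∑ m : M, f m u v) = c u v) :
    (∑ u ∈ S, ∑ v ∈ Sᶜ, c u v) < (∑ u ∈ Sᶜ, ∑ v ∈ S, c u v) ∧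
    ¬(∀ T : Finset V, (∑ u ∈ T, ∑ v ∈ Tᶜ, c u v) = ∑ u ∈ Tᶜ, ∑ v ∈ T, c u v) := by
  classical
  set e : V → ℝ := fun v =>
    (∑ u : V, fR u v) + (∑ m : M, if v = t m then lam m else 0)
      - ((∑ w : V, fR v w) + (∑ m : M, if v = s m then lam m else 0)) with he
  have hDnn : ∀ v, (0:ℝ) ≤ ∑ m : M, if v = t m then lam m else 0 := fun v =>
    Finset.sum_nonneg fun m _ => by by_cases h : v = t m <;> simp [h, (hlam m).le]
  have hOnn : ∀ v, (0:ℝ) ≤ ∑ m : M, if v = s m then lam m else 0 := fun v =>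
    Finset.sum_nonneg fun m _ => by by_cases h : v = s m <;> simp [h, (hlam m).le]
  have hD0 : ∀ v, (¬∃ m, t m = v) → (∑ m : M, if v = t m then lam m else 0) = 0 := by
    intro v hv
    refine Finset.sum_eq_zero fun m _ => ?_
    have : ¬ v = t m := fun h => hv ⟨m, h.symm⟩
    simp [this]
  have hO0 : ∀ v, (¬∃ m, s m = v) → (∑ m : M, if v = s m then lam m else 0) = 0 := by
    intro v hv
    refine Finset.sum_eq_zero fun m _ => ?_
    have : ¬ v = s m := fun h => hv ⟨m, h.symm⟩
    simp [this]
  -- e is nonnegative on S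
  have heS : ∀ v ∈ S, 0 ≤ e v := by
    intro v hv
    simp only [he]
    by_cases hd : ∃ m, t m = v
    · have hO : (∑ m : M, if v = s m then lam m else 0) = 0 :=
        hO0 v (fun hs => hdisj v ⟨hs, hd⟩)
      have := hdest v hd
      linarith
    · by_cases ho : ∃ m, s m = v
      · have hD : (∑ m : M, if v = t m then lam m else 0) = 0 := hD0 v hd
        have h1 : ¬ ((∑ u : V, fR u v) <
            (∑ w : V, fR v w) + (∑ m : M, if v = s m then lam m else 0)) :=
          fun hlt => (horigS v ho hlt) hv
        push_neg at h1
        linarith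
      · have := hmid v ho hd
        rw [hD0 v hd, hO0 v ho]
        linarith
  -- e is nonpositive outside S
  have heSc : ∀ v ∈ Sᶜ, e v ≤ 0 := by
    intro v hv
    have hv' : v ∉ S := Finset.mem_compl.mp hv
    simp only [he]
    by_cases hd : ∃ m, t m = v
    · have hO : (∑ m : M, if v = s m then lam m else 0) = 0 :=
        hO0 v (fun hs => hdisj v ⟨hs, hd⟩)
      have h1 : ¬ ((∑ w : V, fR v w) <
          (∑ u : V, fR u v) + (∑ m : M, if v = t m then lam m else 0)) :=
        fun hlt => hv' (hdestS v hd hlt)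
      push_neg at h1
      linarith
    · by_cases ho : ∃ m, s m = v
      · have := horig v ho
        rw [hD0 v hd]
        linarith
      · have := hmid v ho hd
        rw [hD0 v hd, hO0 v ho]
        linarith
  -- total excess is zero
  have htot : (∑ v : V, e v) = 0 := by
    have h1 : (∑ v : V, ∑ u : V, fR u v) = ∑ v : V, ∑ u : V, fR v u := Finset.sum_comm
    have h2 : (∑ v : V, ∑ m : M, if v = t m then lam m else 0) = ∑ m : M, lam m := by
      rw [Finset.sum_comm]
      exact Finset.sum_congr rfl fun m _ => by simp
    have h3 : (∑ v : V, ∑ m : M, if v = s m then lam m else 0) = ∑ m : M, lam m := by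
      rw [Finset.sum_comm]
      exact Finset.sum_congr rfl fun m _ => by simp
    simp only [he, Finset.sum_sub_distrib, Finset.sum_add_distrib]
    rw [h1, h2, h3]
    ring
  -- some node is defective, and the excess on S is strictly positive
  push_neg at hnotfeas
  obtain ⟨v, hv⟩ := hnotfeas
  have hvne : e v ≠ 0 := by simp only [he]; exact sub_ne_zero.mpr hv
  have hsplit : (∑ x ∈ S, e x) + (∑ x ∈ Sᶜ, e x) = 0 := by
    rw [Finset.sum_add_sum_compl]; exact htot
  have hpos : 0 < ∑ x ∈ S, e x := by
    rcases hvne.lt_or_gt with hlt | hgt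
    · -- defective origin, lies outside S
      have ho : ∃ m, s m = v := by
        by_contra ho
        have hO : (∑ m : M, if v = s m then lam m else 0) = 0 := hO0 v ho
        by_cases hd : ∃ m, t m = v
        · have := hdest v hd
          have : 0 ≤ e v := by simp only [he]; linarith
          linarith
        · have := hmid v ho hd
          have : e v = 0 := by simp only [he]; rw [hD0 v hd, hO]; linarith
          linarith
      have hD : (∑ m : M, if v = t m then lam m else 0) = 0 :=
        hD0 v (fun hd => hdisj v ⟨ho, hd⟩)
      have hdef : (∑ u : V, fR u v) <
          (∑ w : V, fR v w) + (∑ m : M, if v = s m then lam m else 0) := by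
        have : e v < 0 := hlt
        simp only [he] at this
        linarith
      have hvS : v ∈ Sᶜ := Finset.mem_compl.mpr (horigS v ho hdef)
      have hone : (- e v) ≤ ∑ x ∈ Sᶜ, (- e x) :=
        Finset.single_le_sum (f := fun x => - e x)
          (fun x hx => by simpa using neg_nonneg.mpr (heSc x hx)) hvS
      have hsum : (∑ x ∈ Sᶜ, (- e x)) = - ∑ x ∈ Sᶜ, e x := by
        rw [← Finset.sum_neg_distrib]
      rw [hsum] at hone
      have hev : e v < 0 := hlt
      linarith
    · -- defective destination, lies in S
      have hd : ∃ m, t m = v := by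
        by_contra hd
        have hD : (∑ m : M, if v = t m then lam m else 0) = 0 := hD0 v hd
        by_cases ho : ∃ m, s m = v
        · have := horig v ho
          have : e v ≤ 0 := by simp only [he]; linarith
          linarith
        · have := hmid v ho hd
          have : e v = 0 := by simp only [he]; rw [hD, hO0 v ho]; linarith
          linarith
      have hdef : (∑ w : V, fR v w) <
          (∑ u : V, fR u v) + (∑ m : M, if v = t m then lam m else 0) := by
        have hev : 0 < e v := hgt
        simp only [he] at hev
        have := hOnn v
        linarith
      have hvS : v ∈ S := hdestS v hd hdef
      have hone : e v ≤ ∑ x ∈ S, e x := Finset.single_le_sum heS hvS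
      linarith
  -- customer flow conservation summed over requests
  have hFcons : ∀ v : V, (∑ u : V, ∑ m : M, f m u v) + (∑ m : M, if v = s m then lam m else 0)
      = (∑ w : V, ∑ m : M, f m v w) + (∑ m : M, if v = t m then lam m else 0) := by
    intro v
    have h1 : (∑ u : V, ∑ m : M, f m u v) = ∑ m : M, ∑ u : V, f m u v := Finset.sum_comm
    have h2 : (∑ w : V, ∑ m : M, f m v w) = ∑ m : M, ∑ w : V, f m v w := Finset.sum_comm
    rw [h1, h2, ← Finset.sum_add_distrib, ← Finset.sum_add_distrib]
    exact Finset.sum_congr rfl fun m _ => hcons m v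
  -- e equals net flux of the combined flow
  set g : V → V → ℝ := fun u v => fR u v + ∑ m : M, f m u v with hg
  have hEg : ∀ v : V, e v = (∑ u : V, g u v) - (∑ u : V, g v u) := by
    intro v
    have h1 : (∑ u : V, g u v) = (∑ u : V, fR u v) + ∑ u : V, ∑ m : M, f m u v := by
      simp only [hg]; rw [Finset.sum_add_distrib]
    have h2 : (∑ u : V, g v u) = (∑ u : V, fR v u) + ∑ u : V, ∑ m : M, f m v u := by
      simp only [hg]; rw [Finset.sum_add_distrib]
    have := hFcons v
    simp only [he]
    rw [h1, h2]
    linarith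
  have hcut : (∑ x ∈ S, e x) =
      (∑ v ∈ S, ∑ u ∈ Sᶜ, g u v) - (∑ v ∈ S, ∑ u ∈ Sᶜ, g v u) := by
    rw [← cross_cut_aux g S]
    exact Finset.sum_congr rfl fun v _ => hEg v
  -- saturation: outgoing flow equals outgoing capacity
  have hOut : (∑ v ∈ S, ∑ u ∈ Sᶜ, g v u) = ∑ u ∈ S, ∑ v ∈ Sᶜ, c u v :=
    Finset.sum_congr rfl fun v hv => Finset.sum_congr rfl fun u hu => hsat v hv u hu
  -- incoming flow bounded by incoming capacity
  have hIn : (∑ v ∈ S, ∑ u ∈ Sᶜ, g u v) ≤ ∑ u ∈ Sᶜ, ∑ v ∈ S, c u v := by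
    rw [Finset.sum_comm]
    exact Finset.sum_le_sum fun u _ => Finset.sum_le_sum fun v _ => hcap u v
  have hmain : (∑ u ∈ S, ∑ v ∈ Sᶜ, c u v) < ∑ u ∈ Sᶜ, ∑ v ∈ S, c u v := by
    rw [hcut, hOut] at hpos
    linarith
  exact ⟨hmain, fun h => absurd (h S) (ne_of_lt hmain)⟩
end

section
/- (Integral version) Let G be a capacity-symmetric directed graph with integer capacities c : V × V → ℕ, and suppose there exist feasible integer-valued customer flows f_m : V × V → ℕ (satisfying flow conservation with integer rates λ_m ∈ ℕ and Σ_m f_m(u,v) ≤ c(u,v)). Then there exists an integer-valued feasible rebalancing flow f_R : V × V → ℕ satisfying the rebalancing balance equation and f_R(u,v) + Σ_m f_m(u,v) ≤ c(u,v) for all (u,v). -/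
/-- Integral version: on a capacity-symmetric network with integer capacities, given
feasible integer-valued customer flows, an integer-valued feasible rebalancing flow
always exists. -/
theorem stmt_12 {V M : Type*} [Fintype V] [DecidableEq V] [Fintype M]
    (c : V → V → ℕ)
    (hsym : ∀ S : Finset V, (∑ u ∈ S, ∑ v ∈ Sᶜ, c u v) = ∑ u ∈ Sᶜ, ∑ v ∈ S, c u v)
    (s t : M → V) (lam : M → ℕ)
    (hst : ∀ m, s m ≠ t m) (hlam : ∀ m, 0 < lam m)
    (f : M → V → V → ℕ)
    (hcons : ∀ m v, (∑ u : V, f m u v) + (if v = s m then lam m else 0) =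
      (∑ w : V, f m v w) + (if v = t m then lam m else 0))
    (hfcap : ∀ u v, (∑ m : M, f m u v) ≤ c u v) :
    ∃ fR : V → V → ℕ,
      (∀ v : V, (∑ u : V, fR u v) + (∑ m : M, if v = t m then lam m else 0) =
        (∑ w : V, fR v w) + (∑ m : M, if v = s m then lam m else 0)) ∧
      (∀ u v, fR u v + (∑ m : M, f m u v) ≤ c u v) := by
  refine ⟨fun u v => c u v - ∑ m : M, f m u v, ?_, ?_⟩
  · intro v
    -- capacity symmetry at S = {v}
    have hc : (∑ u : V, c u v) = ∑ w : V, c v w := by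
      have := hsym {v}
      simp only [Finset.sum_singleton] at this
      have h1 : (∑ w ∈ ({v} : Finset V)ᶜ, c v w) + c v v
          = ∑ w : V, c v w := by
        rw [add_comm, ← Finset.sum_compl_add_sum {v}]
        simp [add_comm]
      have h2 : (∑ u ∈ ({v} : Finset V)ᶜ, c u v) + c v v
          = ∑ u : V, c u v := by
        rw [add_comm, ← Finset.sum_compl_add_sum {v}]
        simp [add_comm]
      omega
    -- summed flow conservation
    have hF : (∑ u : V, ∑ m : M, f m u v) + (∑ m : M, if v = s m then lam m else 0)
        = (∑ w : V, ∑ m : M, f m v w) + (∑ m : M, if v = t m then lam m else 0) := by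
      rw [show (∑ u : V, ∑ m : M, f m u v) = ∑ m : M, ∑ u : V, f m u v from Finset.sum_comm,
        show (∑ w : V, ∑ m : M, f m v w) = ∑ m : M, ∑ w : V, f m v w from Finset.sum_comm,
        ← Finset.sum_add_distrib, ← Finset.sum_add_distrib]
      exact Finset.sum_congr rfl fun m _ => hcons m v
    have hsub1 : (∑ u : V, (c u v - ∑ m : M, f m u v))
        = (∑ u : V, c u v) - ∑ u : V, ∑ m : M, f m u v := by
      rw [eq_tsub_iff_add_eq_of_le (Finset.sum_le_sum fun u _ => hfcap u v),
        ← Finset.sum_add_distrib]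
      exact Finset.sum_congr rfl fun u _ => Nat.sub_add_cancel (hfcap u v)
    have hsub2 : (∑ w : V, (c v w - ∑ m : M, f m v w))
        = (∑ w : V, c v w) - ∑ w : V, ∑ m : M, f m v w := by
      rw [eq_tsub_iff_add_eq_of_le (Finset.sum_le_sum fun w _ => hfcap v w),
        ← Finset.sum_add_distrib]
      exact Finset.sum_congr rfl fun w _ => Nat.sub_add_cancel (hfcap v w)
    have hle1 : (∑ u : V, ∑ m : M, f m u v) ≤ ∑ u : V, c u v :=
      Finset.sum_le_sum fun u _ => hfcap u v
    have hle2 : (∑ w : V, ∑ m : M, f m v w) ≤ ∑ w : V, c v w :=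
      Finset.sum_le_sum fun w _ => hfcap v w
    beta_reduce
    omega
  · intro u v
    have := hfcap u v
    beta_reduce
    omega
end
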